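/- Let Γ be a colored tree with principal subtrees Γ_1, …, Γ_m. For each i let r_i be the number of minimally complete subsets of E(Γ_i) if Γ_i is non-trivial, and set r_i = 0 if Γ_i is trivial. Then the number of minimally complete subsets of E(Γ) equals (r_1 + 1)(r_2 + 1)⋯(r_m + 1). -/

import Mathlib

noncomputable section
open Classical

/-- A rose tree whose leaves ("colored vertices") carry labels of type `α` and whose
internal vertices ("uncolored vertices") are unlabelled. -/
inductive CTree (α : Type) : Type
  | leaf (a : α) : CTree α
  | node (ts : List (CTree α)) : CTree α

namespace CTree

variable {α : Type}

/-- The subtree of `t` at a position `p` (a list of child indices), if it exists. -/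
def sub : CTree α → List ℕ → Option (CTree α)
  | t, [] => some t
  | leaf _, _ :: _ => none
  | node ts, i :: p =>
      match ts[i]? with
      | some c => sub c p
      | none => none

/-- All lists of natural numbers of length at most `k` with entries `< m`. -/
def allLists (m : ℕ) : ℕ → List (List ℕ)
  | 0 => [[]]
  | k + 1 => [] :: (List.range m).flatMap (fun i => (allLists m k).map (i :: ·))

/-- The finite set of positions of vertices of `t`. -/
def vertS (t : CTree α) : Finset (List ℕ) :=
  (allLists (sizeOf t) (sizeOf t)).toFinset.filter (fun p => (t.sub p).isSome)

/-- The finite set of positions of uncolored (internal) vertices of `t`. -/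
def uncS (t : CTree α) : Finset (List ℕ) :=
  (allLists (sizeOf t) (sizeOf t)).toFinset.filter (fun p => ∃ ts, t.sub p = some (node ts))

/-- The finite set of positions of colored vertices (leaves) of `t`. -/
def colS (t : CTree α) : Finset (List ℕ) :=
  (allLists (sizeOf t) (sizeOf t)).toFinset.filter (fun p => ∃ a, t.sub p = some (leaf a))

/-- Edges of `t` are identified with the positions of non-root vertices (an edge joins
the vertex at `p ≠ []` to its parent at `p.dropLast`). -/
def edgeS (t : CTree α) : Finset (List ℕ) := (vertS t).erase []

/-- `t` is a colored tree: every internal vertex has at least one child (so the leaves,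
i.e. the childless vertices, are exactly the colored vertices) and the root is
uncolored. -/
def IsColoredTree (t : CTree α) : Prop :=
  (∀ p, t.sub p ≠ some (node ([] : List (CTree α)))) ∧ ∃ ts, t = node ts

/-- The weight `w_d ∈ M` of an edge `d`: the sum of the dual basis vectors `e_u^*`
over uncolored vertices `u` that are descendants of the upper endpoint of `d` but not
descendants of the lower endpoint of `d`. -/
def wt (t : CTree α) (d : List ℕ) : List ℕ → ℤ := fun u =>
  if u ∈ uncS t ∧ d.dropLast <+: u ∧ ¬ d <+: u then 1 else 0

/-- `s_v ∈ M` : the sum of `e_u^*` over the uncolored descendants `u` of `v`;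
`s(Γ) = sv t []`. -/
def sv (t : CTree α) (v : List ℕ) : List ℕ → ℤ := fun u =>
  if u ∈ uncS t ∧ v <+: u then 1 else 0

/-- The pairing between `M = Hom(ℤ^g, ℤ)` and `ℤ^g` (both realized as integer-valued
functions on the uncolored vertices of `t`). -/
def pairZ (t : CTree α) (μ x : List ℕ → ℤ) : ℤ := ∑ p ∈ uncS t, μ p * x p

/-- The pairing between `M` and `ℝ^g`. -/
def pairR (t : CTree α) (μ : List ℕ → ℤ) (x : List ℕ → ℝ) : ℝ :=
  ∑ p ∈ uncS t, (μ p : ℝ) * x p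

/-- The multiset of edges of the (downward) path from the vertex `v` to the vertex `c`;
each edge occurs with multiplicity one. -/
def pathEdges (t : CTree α) (v c : List ℕ) : Multiset (List ℕ) :=
  ((edgeS t).filter (fun d => v <+: d ∧ d ≠ v ∧ d <+: c)).val

/-- The relation `A ∼ B` on multisets of edges: `A` and `B` consist exactly of the edges
of two non-self-crossing paths from a common vertex to two colored vertices. -/
def Sim (t : CTree α) (A B : Multiset (List ℕ)) : Prop :=
  ∃ v ∈ vertS t, ∃ c₁ ∈ colS t, ∃ c₂ ∈ colS t, v <+: c₁ ∧ v <+: c₂ ∧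
    A = pathEdges t v c₁ ∧ B = pathEdges t v c₂

/-- `Y` is a minimally complete subset of the set of edges of `t`: every
(non-self-crossing) path from the root to a colored vertex contains exactly one edge
of `Y`. -/
def MinComplete (t : CTree α) (Y : Finset (List ℕ)) : Prop :=
  Y ⊆ edgeS t ∧ ∀ c ∈ colS t, ∃! d, d ∈ Y ∧ d <+: c

/-- The finite set of minimally complete subsets of the edge set of `t`. -/
def MCfin (t : CTree α) : Finset (Finset (List ℕ)) :=
  (edgeS t).powerset.filter (fun Y => MinComplete t Y)

/-- The dual cone `C(Γ) = {x ∈ ℝ^g | ⟨w_d, x⟩ ≥ 0 for all edges d}`. -/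
def dualCone (t : CTree α) : Set (List ℕ → ℝ) :=
  {x | (∀ p, p ∉ uncS t → x p = 0) ∧ ∀ d ∈ edgeS t, 0 ≤ pairR t (wt t d) x}

/-- The ray spanned by a vector `v`. -/
def ray (v : List ℕ → ℝ) : Set (List ℕ → ℝ) := {x | ∃ c : ℝ, 0 ≤ c ∧ x = c • v}

/-- `F` is a one-dimensional face (extreme ray) of the convex cone `C`. -/
def IsOneDimFace (C F : Set (List ℕ → ℝ)) : Prop :=
  F ⊆ C ∧ (∃ v, v ≠ 0 ∧ F = ray v) ∧
    ∀ x ∈ C, ∀ y ∈ C, x + y ∈ F → x ∈ F ∧ y ∈ F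

/-- The convex cone generated by a set `G ⊆ ℤ^g` inside `ℝ^g`: all finite nonnegative
real combinations of elements of `G`. -/
def coneHull (G : Set (List ℕ → ℤ)) : Set (List ℕ → ℝ) :=
  {x | ∃ (F : Finset (List ℕ → ℤ)) (c : (List ℕ → ℤ) → ℝ),
    ↑F ⊆ G ∧ (∀ v ∈ F, 0 ≤ c v) ∧
    x = ∑ v ∈ F, c v • (fun p => ((v p : ℤ) : ℝ))}

/-- `e_{v_0} ∈ ℤ^g`: the basis vector of the root vertex. -/
def e0 : List ℕ → ℤ := fun p => if p = [] then 1 else 0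

/-- The inclusion `ℤ^{g_i} → ℤ^g` corresponding to the `i`-th principal subtree. -/
def shift (i : ℕ) (f : List ℕ → ℤ) : List ℕ → ℤ := fun p =>
  match p with
  | [] => 0
  | j :: q => if j = i then f q else 0

def isNodeB : CTree α → Bool
  | leaf _ => false
  | node _ => true

/-- The recursively defined set `G(Γ) ⊆ ℤ^g`: `G(Γ)` consists of all vectors
`e_{v₀} + ∑_{i ∈ J} (w_i - e_{v₀})` where `J` ranges over subsets of the set of indices
of non-trivial principal subtrees and `w_i ∈ G(Γ_i)` (in particular if `g = 1` this is
just `{e_{v₀}}`). -/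
def Gset : CTree α → Set (List ℕ → ℤ)
  | leaf _ => ∅
  | node ts =>
      {v | ∃ (J : Finset (Fin ts.length)) (w : Fin ts.length → (List ℕ → ℤ)),
        (∀ i ∈ J, (ts.get i).isNodeB = true ∧ w i ∈ Gset (ts.get i)) ∧
        v = e0 + ∑ i ∈ J, (shift i.1 (w i) - e0)}
  termination_by t => sizeOf t
  decreasing_by
    have h1 : ts.get i ∈ ts := List.get_mem ts i
    have h2 := List.sizeOf_lt_of_mem h1
    simp only [CTree.node.sizeOf_spec]
    omega

/-- Transport of a set of edges of `Γ` to the `i`-th principal subtree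
(`Y ∩ E(Γ_i)`, rewritten in the coordinates of `Γ_i`). -/
def sect (i : ℕ) (Y : Finset (List ℕ)) : Finset (List ℕ) :=
  (Y.filter (fun p => p.head? = some i)).image List.tail

/-- The recursively defined vector `v_Y ∈ ℤ^g` attached to a (minimally complete) set
of edges `Y`: `v_Y = e_{v₀} + ∑_{i ∈ I} (v_{Y_i} - e_{v₀})` where
`I = {i | d_i ∉ Y}` and `Y_i = Y ∩ E(Γ_i)` (if `g = 1` this is just `e_{v₀}`). -/
def vY : CTree α → Finset (List ℕ) → (List ℕ → ℤ)
  | leaf _, _ => 0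
  | node ts, Y =>
      e0 + ∑ i ∈ Finset.univ.filter (fun i : Fin ts.length => [i.1] ∉ Y),
        (shift i.1 (vY (ts.get i) (sect i.1 Y)) - e0)
  termination_by t => sizeOf t
  decreasing_by
    have h1 : ts.get i ∈ ts := List.get_mem ts i
    have h2 := List.sizeOf_lt_of_mem h1
    simp only [CTree.node.sizeOf_spec]
    omega

/-- The set of balanced labellings `X(Γ) ⊆ ℂ^{E(Γ)}`. -/
def Xbal (t : CTree α) : Set (List ℕ → ℂ) :=
  {x | ∀ v ∈ uncS t, ∀ c ∈ colS t, ∀ c' ∈ colS t, v <+: c → v <+: c' →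
    ((pathEdges t v c).map x).prod = ((pathEdges t v c').map x).prod}

/-- `Y ⊆ E(Γ)` is complete: for every finite multiset `A` of edges, the monomial
`∏_{d ∈ A} x_d` vanishes identically on `{x ∈ X(Γ) | x_y = 0 ∀ y ∈ Y}` if and only if
`A` contains at least one edge belonging to `Y`. -/
def CompleteSet (t : CTree α) (Y : Finset (List ℕ)) : Prop :=
  ∀ A : Multiset (List ℕ), (∀ d ∈ A, d ∈ edgeS t) →
    ((∀ x ∈ Xbal t, (∀ y ∈ Y, x y = 0) → (A.map x).prod = 0) ↔ ∃ d ∈ A, d ∈ Y)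

/-- A partition of a type `I`: a finite collection of nonempty pairwise disjoint
subsets covering `I`. -/
def IsPart {I : Type} (P : Finset (Finset I)) : Prop :=
  (∀ S ∈ P, S ≠ ∅) ∧ ∀ a : I, ∃! S, S ∈ P ∧ a ∈ S

/-- The tree with a single uncolored vertex whose children are the colored vertices
labelled by the elements of `S`. -/
def blockTree {I : Type} (S : Finset I) : CTree I := node (S.toList.map leaf)

/-- The colored tree `Γ_P` of a partition `P`: the root has one child for each block
`S ∈ P`, an uncolored vertex whose children are colored vertices labelled by the
elements of `S`. -/
def gammaP {I : Type} (P : Finset (Finset I)) : CTree I := node (P.toList.map blockTree)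

/-- A tree homomorphism `t → t'`, described by a map `f` on vertex positions: it sends
root to root, vertices to vertices, the two endpoints of any edge to the two endpoints
of an edge, and restricts to a label-preserving bijection between the colored
vertices. -/
def TreeHom {I : Type} (t t' : CTree I) (f : List ℕ → List ℕ) : Prop :=
  f [] = [] ∧
  (∀ p ∈ vertS t, f p ∈ vertS t') ∧
  (∀ p ∈ vertS t, p ≠ [] →
    (f p ≠ [] ∧ (f p).dropLast = f p.dropLast) ∨
    (f p.dropLast ≠ [] ∧ (f p.dropLast).dropLast = f p)) ∧
  (∀ p a, t.sub p = some (leaf a) → t'.sub (f p) = some (leaf a)) ∧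
  Set.BijOn f {p | ∃ a, t.sub p = some (leaf a)} {q | ∃ a, t'.sub q = some (leaf a)}

/-- A partition `P` of the label set is compatible with the colored tree `t` if there
exists a tree homomorphism `t → Γ_P`. -/
def Compatible {I : Type} (t : CTree I) (P : Finset (Finset I)) : Prop :=
  ∃ f, TreeHom t (gammaP P) f

/-- `C_y ⊆ I` : the labels of the colored vertices whose path from the root contains
the edge `y`. -/
def Cy {I : Type} [Fintype I] [DecidableEq I] (t : CTree I) (y : List ℕ) : Finset I :=
  Finset.univ.filter (fun a => ∃ p, t.sub p = some (leaf a) ∧ y <+: p)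

end CTree

namespace CTree

variable {α : Type}

theorem sub_nil' (t : CTree α) : t.sub [] = some t := by cases t <;> rfl

theorem sub_cons (ts : List (CTree α)) (i : ℕ) (p : List ℕ) :
    (node ts).sub (i :: p) = match ts[i]? with
      | some c => c.sub p
      | none => none := rfl

theorem sub_cons_of_getElem (ts : List (CTree α)) (i : ℕ) (hi : i < ts.length) (p : List ℕ) :
    (node ts).sub (i :: p) = (ts.get ⟨i, hi⟩).sub p := by
  rw [sub_cons]
  have : ts[i]? = some (ts.get ⟨i, hi⟩) := by
    simp [List.getElem?_eq_getElem hi]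
  rw [this]

theorem mem_allLists {m k : ℕ} {p : List ℕ} :
    p ∈ allLists m k ↔ p.length ≤ k ∧ ∀ x ∈ p, x < m := by
  induction k generalizing p with
  | zero =>
    simp only [allLists, List.mem_singleton]
    constructor
    · rintro rfl; simp
    · rintro ⟨h1, _⟩; exact List.eq_nil_of_length_eq_zero (Nat.le_zero.mp h1)
  | succ k ih =>
    simp only [allLists, List.mem_cons, List.mem_flatMap, List.mem_map, List.mem_range]
    constructor
    · rintro (rfl | ⟨i, hi, q, hq, rfl⟩)
      · simp
      · obtain ⟨h1, h2⟩ := ih.mp hq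
        refine ⟨by simpa using Nat.succ_le_succ h1, ?_⟩
        intro x hx
        rcases List.mem_cons.mp hx with rfl | hx
        · exact hi
        · exact h2 x hx
    · rintro ⟨h1, h2⟩
      cases p with
      | nil => exact Or.inl rfl
      | cons i q =>
        refine Or.inr ⟨i, h2 i List.mem_cons_self, q,
          ih.mpr ⟨Nat.le_of_succ_le_succ h1, fun x hx => h2 x (List.mem_cons_of_mem _ hx)⟩, rfl⟩

theorem sub_bounds : ∀ (t : CTree α) (p : List ℕ), (t.sub p).isSome →
    p.length < sizeOf t ∧ ∀ x ∈ p, x < sizeOf t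
  | t, [], _ => by
      cases t <;> simp_all <;> omega
  | leaf _, _ :: _, h => by simp [sub] at h
  | node ts, i :: p, h => by
      rw [sub_cons] at h
      cases hg : ts[i]? with
      | none => rw [hg] at h; simp at h
      | some c =>
        rw [hg] at h
        have hmem : c ∈ ts := by
          have hi : i < ts.length := by
            by_contra hc
            rw [List.getElem?_eq_none (Nat.le_of_not_lt hc)] at hg
            simp at hg
          have := List.getElem?_eq_getElem hi
          rw [hg] at this
          exact (Option.some.injEq _ _ ▸ this.symm) ▸ List.getElem_mem hi
        have hsz : sizeOf c < sizeOf ts := List.sizeOf_lt_of_mem hmem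
        have hlen : i < ts.length := by
          by_contra hc
          rw [List.getElem?_eq_none (Nat.le_of_not_lt hc)] at hg
          simp at hg
        have hts : ts.length < sizeOf ts := by
          clear * -
          induction ts with
          | nil => simp
          | cons a l ih =>
            simp only [List.length_cons, List.cons.sizeOf_spec]
            have : 1 ≤ sizeOf a := by cases a <;> simp <;> omega
            omega
        obtain ⟨h1, h2⟩ := sub_bounds c p h
        simp only [CTree.node.sizeOf_spec, List.length_cons]
        constructor
        · omega
        · intro x hx
          rcases List.mem_cons.mp hx with rfl | hx
          · omega
          · have := h2 x hx; omega
  termination_by t => sizeOf t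
  decreasing_by
    simp only [CTree.node.sizeOf_spec]; omega

theorem mem_vertS {t : CTree α} {p : List ℕ} : p ∈ vertS t ↔ (t.sub p).isSome := by
  simp only [vertS, Finset.mem_filter, List.mem_toFinset]
  constructor
  · exact fun h => h.2
  · intro h
    refine ⟨mem_allLists.mpr ?_, h⟩
    obtain ⟨h1, h2⟩ := sub_bounds t p h
    exact ⟨Nat.le_of_lt h1, fun x hx => Nat.lt_of_lt_of_le (h2 x hx) (le_refl _)⟩

theorem mem_colS {t : CTree α} {p : List ℕ} : p ∈ colS t ↔ ∃ a, t.sub p = some (leaf a) := by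
  simp only [colS, Finset.mem_filter, List.mem_toFinset]
  constructor
  · exact fun h => h.2
  · intro h
    refine ⟨mem_allLists.mpr ?_, h⟩
    obtain ⟨a, ha⟩ := h
    have : (t.sub p).isSome := by rw [ha]; rfl
    obtain ⟨h1, h2⟩ := sub_bounds t p this
    exact ⟨Nat.le_of_lt h1, h2⟩

theorem mem_edgeS {t : CTree α} {p : List ℕ} :
    p ∈ edgeS t ↔ p ≠ [] ∧ (t.sub p).isSome := by
  simp only [edgeS, Finset.mem_erase, mem_vertS]

theorem sub_append (t : CTree α) (p q : List ℕ) :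
    t.sub (p ++ q) = (t.sub p).bind (fun s => s.sub q) := by
  induction p generalizing t with
  | nil => simp [sub_nil']
  | cons i p ih =>
    cases t with
    | leaf a => simp [sub]
    | node ts =>
      rw [List.cons_append, sub_cons, sub_cons]
      cases ts[i]? with
      | none => simp
      | some c => simp [ih c]

theorem exists_leaf : ∀ (t : CTree α),
    (∀ q, t.sub q ≠ some (node ([] : List (CTree α)))) →
    ∃ c a, t.sub c = some (leaf a)
  | leaf a, _ => ⟨[], a, rfl⟩
  | node [], h => absurd (sub_nil' _) (h [])
  | node (t0 :: ts'), h => by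
      have h0 : ∀ q, t0.sub q ≠ some (node ([] : List (CTree α))) := by
        intro q hq
        apply h (0 :: q)
        rw [sub_cons]
        simpa using hq
      obtain ⟨c, a, hc⟩ := exists_leaf t0 h0
      refine ⟨0 :: c, a, ?_⟩
      rw [sub_cons]
      simpa using hc
  termination_by t => sizeOf t
  decreasing_by
    simp only [CTree.node.sizeOf_spec, List.cons.sizeOf_spec]
    omega

theorem edge_has_colored_desc {t : CTree α}
    (h : ∀ q, t.sub q ≠ some (node ([] : List (CTree α))))
    {p : List ℕ} (hp : (t.sub p).isSome) :
    ∃ c, p <+: c ∧ c ∈ colS t := by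
  obtain ⟨s, hs⟩ := Option.isSome_iff_exists.mp hp
  have hs' : ∀ q, s.sub q ≠ some (node ([] : List (CTree α))) := by
    intro q hq
    apply h (p ++ q)
    rw [sub_append, hs]
    simpa using hq
  obtain ⟨c, a, hc⟩ := exists_leaf s hs'
  refine ⟨p ++ c, List.prefix_append _ _, mem_colS.mpr ⟨a, ?_⟩⟩
  rw [sub_append, hs]
  simpa using hc

end CTree

namespace CTree

variable {α : Type}

/-- Shift the head index of a position up by one. -/
def up : List ℕ → List ℕ
  | [] => []
  | j :: q => (j + 1) :: q

theorem up_injective : Function.Injective (up : List ℕ → List ℕ) := by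
  intro a b hab
  cases a with
  | nil => cases b with
    | nil => rfl
    | cons k q => simp [up] at hab
  | cons j q => cases b with
    | nil => simp [up] at hab
    | cons k r =>
      simp only [up, List.cons.injEq] at hab
      obtain ⟨h1, h2⟩ := hab
      simp [Nat.succ_injective h1, h2]

theorem mem_MCfin {t : CTree α} {Y : Finset (List ℕ)} :
    Y ∈ MCfin t ↔ MinComplete t Y := by
  simp only [MCfin, Finset.mem_filter, Finset.mem_powerset]
  exact ⟨fun h => h.2, fun h => ⟨h.1, h⟩⟩

theorem sub_node_cons_zero (t0 : CTree α) (ts' : List (CTree α)) (q : List ℕ) :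
    (node (t0 :: ts')).sub (0 :: q) = t0.sub q := by
  rw [sub_cons]; simp

theorem sub_node_up (t0 : CTree α) (ts' : List (CTree α)) (j : ℕ) (q : List ℕ) :
    (node (t0 :: ts')).sub ((j + 1) :: q) = (node ts').sub (j :: q) := by
  rw [sub_cons, sub_cons]
  simp

theorem nil_not_mem_colS {ts : List (CTree α)} : [] ∉ colS (node ts) := by
  rw [mem_colS]
  rintro ⟨a, ha⟩
  rw [sub_nil'] at ha
  simp at ha

theorem colS_node_elim {ts : List (CTree α)} {c : List ℕ} (hc : c ∈ colS (node ts)) :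
    ∃ i q, c = i :: q := by
  cases c with
  | nil => exact absurd hc nil_not_mem_colS
  | cons i q => exact ⟨i, q, rfl⟩

theorem edgeS_node_nil : edgeS (node ([] : List (CTree α))) = ∅ := by
  ext p
  simp only [mem_edgeS, Finset.notMem_empty, iff_false, not_and]
  intro hp
  cases p with
  | nil => exact absurd rfl hp
  | cons i q => rw [sub_cons]; simp

theorem colS_node_nil : colS (node ([] : List (CTree α))) = ∅ := by
  ext p
  simp only [mem_colS, Finset.notMem_empty, iff_false, not_exists]
  intro a ha
  cases p with
  | nil => rw [sub_nil'] at ha; simp at ha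
  | cons i q => rw [sub_cons] at ha; simp at ha

theorem MCfin_node_nil : MCfin (node ([] : List (CTree α))) = {∅} := by
  ext Y
  simp only [mem_MCfin, MinComplete, edgeS_node_nil, colS_node_nil, Finset.mem_singleton]
  constructor
  · rintro ⟨h1, _⟩
    exact Finset.subset_empty.mp h1
  · rintro rfl
    exact ⟨Finset.empty_subset _, fun c hc => absurd hc (Finset.notMem_empty c)⟩

/-- The possible intersections of a minimally complete set with the edges below child 0. -/
def D0 : CTree α → Finset (Finset (List ℕ))
  | leaf _ => {{[0]}}
  | node cs => insert {[0]} ((MCfin (node cs)).image (fun Z => Z.image (List.cons 0)))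

theorem card_D0 (t0 : CTree α) :
    (D0 t0).card = (match t0 with
      | leaf _ => 0
      | node cs => (MCfin (node cs)).card) + 1 := by
  cases t0 with
  | leaf a => simp [D0]
  | node cs =>
    simp only [D0]
    have hnm : {[0]} ∉ (MCfin (node cs)).image (fun Z => Z.image (List.cons 0)) := by
      intro hmem
      obtain ⟨Z, hZ, hZeq⟩ := Finset.mem_image.mp hmem
      have : [0] ∈ Finset.image (List.cons 0) Z := by rw [hZeq]; simp
      obtain ⟨q, hq, hq2⟩ := Finset.mem_image.mp this
      have : q = [] := List.tail_eq_of_cons_eq hq2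
      subst this
      have := (mem_MCfin.mp hZ).1 hq
      exact (mem_edgeS.mp this).1 rfl
    rw [Finset.card_insert_of_notMem hnm, Finset.card_image_of_injective _
      (Finset.image_injective (fun a b hab => List.tail_eq_of_cons_eq hab))]

/-- Shift the head index of a position down by one. -/
def dn : List ℕ → List ℕ
  | [] => []
  | j :: q => (j - 1) :: q

theorem prefix_cons_elim {d : List ℕ} {i : ℕ} {q : List ℕ}
    (h : d <+: i :: q) (hd : d ≠ []) : ∃ r, d = i :: r ∧ r <+: q := by
  cases d with
  | nil => exact absurd rfl hd
  | cons j r =>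
    rw [List.cons_prefix_cons] at h
    exact ⟨r, by rw [h.1], h.2⟩

theorem MCfin_node_cons (t0 : CTree α) (ts' : List (CTree α))
    (h0 : ∀ q, t0.sub q ≠ some (node ([] : List (CTree α)))) :
    MCfin (node (t0 :: ts')) =
      ((D0 t0) ×ˢ MCfin (node ts')).image (fun pr => pr.1 ∪ pr.2.image up) := by
  ext Y
  simp only [Finset.mem_image, Finset.mem_product, Prod.exists]
  constructor
  · -- forward direction
    intro hY
    obtain ⟨hsub, hcomp⟩ := mem_MCfin.mp hY
    -- every element of Y is a nonempty list with valid sub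
    have hshape : ∀ d ∈ Y, ∃ i q, d = i :: q ∧
        ((node (t0 :: ts')).sub (i :: q)).isSome := by
      intro d hd
      have := mem_edgeS.mp (hsub hd)
      cases d with
      | nil => exact absurd rfl this.1
      | cons i q => exact ⟨i, q, rfl, this.2⟩
    set A := Y.filter (fun p => p.head? = some 0) with hAdef
    set B := (Y.filter (fun p => p.head? ≠ some 0)).image dn with hBdef
    refine ⟨A, B, ⟨?_, ?_⟩, ?_⟩
    · -- A ∈ D0 t0
      cases t0 with
      | leaf a =>
        -- A = {[0]}
        have hc0 : [0] ∈ colS (node (leaf a :: ts')) := by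
          rw [mem_colS]
          exact ⟨a, by rw [sub_node_cons_zero]; rfl⟩
        obtain ⟨d, ⟨hdY, hdp⟩, _⟩ := hcomp [0] hc0
        have hd0 : d = [0] := by
          obtain ⟨i, q, rfl, _⟩ := hshape d hdY
          obtain ⟨r, h1, h2⟩ := prefix_cons_elim hdp (by simp)
          have : r = [] := List.prefix_nil.mp h2
          obtain ⟨hi, hq⟩ := List.cons.inj h1
          simp [hi, hq, this]
        subst hd0
        have : A = {[0]} := by
          ext p
          simp only [hAdef, Finset.mem_filter, Finset.mem_singleton]
          constructor
          · rintro ⟨hpY, hph⟩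
            obtain ⟨i, q, rfl, hsome⟩ := hshape p hpY
            have hi : i = 0 := by simpa using hph
            subst hi
            rw [sub_node_cons_zero] at hsome
            cases q with
            | nil => rfl
            | cons j r => simp [sub] at hsome
          · rintro rfl
            exact ⟨hdY, rfl⟩
        rw [this]
        simp [D0]
      | node cs =>
        by_cases h0Y : [0] ∈ Y
        · -- A = {[0]}
          have : A = {[0]} := by
            ext p
            simp only [hAdef, Finset.mem_filter, Finset.mem_singleton]
            constructor
            · rintro ⟨hpY, hph⟩
              obtain ⟨i, q, rfl, hsome⟩ := hshape p hpY
              have hi : i = 0 := by simpa using hph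
              subst hi
              by_contra hne
              have hq : q ≠ [] := by
                intro hq; exact hne (by rw [hq])
              rw [sub_node_cons_zero] at hsome
              obtain ⟨c, hqc, hccol⟩ := edge_has_colored_desc h0 hsome
              have hcol : (0 :: c) ∈ colS (node (node cs :: ts')) := by
                rw [mem_colS, sub_node_cons_zero]
                exact mem_colS.mp hccol
              obtain ⟨d, _, huniq⟩ := hcomp (0 :: c) hcol
              have e1 : (0 : ℕ) :: q = d :=
                huniq _ ⟨hpY, List.cons_prefix_cons.mpr ⟨rfl, hqc⟩⟩
              have e2 : [0] = d := huniq _ ⟨h0Y, List.cons_prefix_cons.mpr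
                ⟨rfl, List.nil_prefix⟩⟩
              rw [← e2] at e1
              exact hq (List.cons.inj e1).2
            · rintro rfl
              exact ⟨h0Y, rfl⟩
          rw [this]
          simp [D0]
        · -- A = image (0 :: ·) of a minimally complete Z for t0
          have hAelt : ∀ p ∈ A, ∃ q, q ≠ [] ∧ p = 0 :: q ∧ ((node cs).sub q).isSome := by
            intro p hp
            obtain ⟨hpY, hph⟩ := Finset.mem_filter.mp hp
            obtain ⟨i, q, rfl, hsome⟩ := hshape p hpY
            have hi : i = 0 := by simpa using hph
            subst hi
            rw [sub_node_cons_zero] at hsome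
            refine ⟨q, ?_, rfl, hsome⟩
            intro hq
            subst hq
            exact h0Y hpY
          set Z := A.image List.tail with hZdef
          have hAZ : A = Z.image (List.cons 0) := by
            ext p
            simp only [hZdef, Finset.mem_image]
            constructor
            · intro hp
              obtain ⟨q, _, rfl, _⟩ := hAelt p hp
              exact ⟨q, ⟨0 :: q, hp, rfl⟩, rfl⟩
            · rintro ⟨q, ⟨p', hp', rfl⟩, rfl⟩
              obtain ⟨q', _, rfl, _⟩ := hAelt p' hp'
              exact hp'
          have hZmc : MinComplete (node cs) Z := by
            constructor
            · intro q hq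
              obtain ⟨p', hp', rfl⟩ := Finset.mem_image.mp hq
              obtain ⟨q', hq', rfl, hsome⟩ := hAelt p' hp'
              rw [mem_edgeS]
              exact ⟨hq', hsome⟩
            · intro c hc
              have hcol : (0 :: c) ∈ colS (node (node cs :: ts')) := by
                rw [mem_colS, sub_node_cons_zero]
                exact mem_colS.mp hc
              obtain ⟨d, ⟨hdY, hdp⟩, huniq⟩ := hcomp (0 :: c) hcol
              obtain ⟨i, q, rfl, hsome⟩ := hshape d hdY
              obtain ⟨r, hr1, hr2⟩ := prefix_cons_elim hdp (by simp)
              have hi0 : i = 0 := (List.cons.inj hr1).1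
              subst hi0
              have hqr : q = r := (List.cons.inj hr1).2
              subst hqr
              have hA : (0 :: q) ∈ A := by
                rw [hAdef, Finset.mem_filter]
                exact ⟨hdY, rfl⟩
              refine ⟨q, ⟨Finset.mem_image.mpr ⟨0 :: q, hA, rfl⟩, hr2⟩, ?_⟩
              rintro q' ⟨hq'Z, hq'p⟩
              obtain ⟨p', hp', rfl⟩ := Finset.mem_image.mp hq'Z
              obtain ⟨q'', _, rfl, _⟩ := hAelt p' hp'
              have : (0 : ℕ) :: q'' = 0 :: q := huniq (0 :: q'')
                ⟨(Finset.mem_filter.mp hp').1, List.cons_prefix_cons.mpr ⟨rfl, hq'p⟩⟩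
              simpa using (List.cons.inj this).2
          rw [hAZ]
          simp only [D0, Finset.mem_insert]
          exact Or.inr (Finset.mem_image.mpr ⟨Z, mem_MCfin.mpr hZmc, rfl⟩)
    · -- B ∈ MCfin (node ts')
      have hBelt : ∀ e ∈ B, ∃ j q, e = j :: q ∧ ((j + 1) :: q) ∈ Y ∧
          ((node ts').sub (j :: q)).isSome := by
        intro e he
        obtain ⟨d, hd, rfl⟩ := Finset.mem_image.mp he
        obtain ⟨hdY, hdh⟩ := Finset.mem_filter.mp hd
        obtain ⟨i, q, rfl, hsome⟩ := hshape d hdY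
        cases i with
        | zero => exact absurd rfl hdh
        | succ j =>
          rw [sub_node_up] at hsome
          exact ⟨j, q, rfl, hdY, hsome⟩
      rw [mem_MCfin]
      constructor
      · intro e he
        obtain ⟨j, q, rfl, _, hsome⟩ := hBelt e he
        rw [mem_edgeS]
        exact ⟨by simp, hsome⟩
      · intro c hc
        obtain ⟨j, q, rfl⟩ := colS_node_elim hc
        have hcol : ((j + 1) :: q) ∈ colS (node (t0 :: ts')) := by
          rw [mem_colS, sub_node_up]
          exact mem_colS.mp hc
        obtain ⟨d, ⟨hdY, hdp⟩, huniq⟩ := hcomp ((j + 1) :: q) hcol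
        obtain ⟨i, r, rfl, hsome⟩ := hshape d hdY
        obtain ⟨r', hr1, hr2⟩ := prefix_cons_elim hdp (by simp)
        have hi : i = j + 1 := (List.cons.inj hr1).1
        subst hi
        have hrr : r = r' := (List.cons.inj hr1).2
        subst hrr
        have hdB : (j :: r) ∈ B := by
          rw [hBdef]
          refine Finset.mem_image.mpr ⟨(j + 1) :: r, ?_, rfl⟩
          rw [Finset.mem_filter]
          exact ⟨hdY, by simp⟩
        refine ⟨j :: r, ⟨hdB, List.cons_prefix_cons.mpr ⟨rfl, hr2⟩⟩, ?_⟩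
        rintro e ⟨heB, hep⟩
        obtain ⟨k, s, rfl, hkY, _⟩ := hBelt e heB
        rw [List.cons_prefix_cons] at hep
        obtain ⟨rfl, hsq⟩ := hep
        have : (k + 1) :: s = (k + 1) :: r := huniq ((k + 1) :: s)
          ⟨hkY, List.cons_prefix_cons.mpr ⟨rfl, hsq⟩⟩
        rw [(List.cons.inj this).2]
    · -- Y = A ∪ B.image up
      ext p
      simp only [Finset.mem_union, hAdef, hBdef, Finset.mem_filter, Finset.image_image,
        Finset.mem_image, Function.comp]
      constructor
      · rintro (⟨hp, _⟩ | ⟨d, ⟨hdY, hdh⟩, rfl⟩)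
        · exact hp
        · obtain ⟨i, q, rfl, _⟩ := hshape d hdY
          cases i with
          | zero => exact absurd rfl hdh
          | succ j => simpa [dn, up] using hdY
      · intro hp
        obtain ⟨i, q, rfl, _⟩ := hshape p hp
        cases i with
        | zero => exact Or.inl ⟨hp, rfl⟩
        | succ j =>
          refine Or.inr ⟨(j + 1) :: q, ⟨hp, by simp⟩, ?_⟩
          simp [dn, up]
  · -- backward direction
    rintro ⟨A, B, ⟨hA, hB⟩, rfl⟩
    obtain ⟨hBsub, hBcomp⟩ := mem_MCfin.mp hB
    have hBelt : ∀ e ∈ B, ∃ j q, e = j :: q ∧ ((node ts').sub (j :: q)).isSome := by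
      intro e he
      have := mem_edgeS.mp (hBsub he)
      cases e with
      | nil => exact absurd rfl this.1
      | cons j q => exact ⟨j, q, rfl, this.2⟩
    have hAcase : A = {[0]} ∨ ∃ Z, MinComplete t0 Z ∧ A = Z.image (List.cons 0) := by
      cases t0 with
      | leaf a =>
        simp only [D0, Finset.mem_singleton] at hA
        exact Or.inl hA
      | node cs =>
        simp only [D0, Finset.mem_insert] at hA
        rcases hA with rfl | hA
        · exact Or.inl rfl
        · obtain ⟨Z, hZ, rfl⟩ := Finset.mem_image.mp hA
          exact Or.inr ⟨Z, mem_MCfin.mp hZ, rfl⟩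
    -- elements of A are prefixed by 0, elements of B.image up have nonzero head
    have hAelt : ∀ p ∈ A, ∃ q, p = 0 :: q ∧ ((node (t0 :: ts')).sub (0 :: q)).isSome := by
      intro p hp
      rcases hAcase with rfl | ⟨Z, hZmc, rfl⟩
      · rw [Finset.mem_singleton] at hp
        subst hp
        refine ⟨[], rfl, ?_⟩
        rw [sub_node_cons_zero, sub_nil']
        rfl
      · obtain ⟨q, hq, rfl⟩ := Finset.mem_image.mp hp
        have := mem_edgeS.mp (hZmc.1 hq)
        refine ⟨q, rfl, ?_⟩
        rw [sub_node_cons_zero]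
        exact this.2
    rw [mem_MCfin]
    constructor
    · -- union is a subset of edges
      intro p hp
      rcases Finset.mem_union.mp hp with hp | hp
      · obtain ⟨q, rfl, hsome⟩ := hAelt p hp
        rw [mem_edgeS]
        exact ⟨by simp, hsome⟩
      · obtain ⟨e, he, rfl⟩ := Finset.mem_image.mp hp
        obtain ⟨j, q, rfl, hsome⟩ := hBelt e he
        rw [mem_edgeS]
        refine ⟨by simp [up], ?_⟩
        show ((node (t0 :: ts')).sub ((j + 1) :: q)).isSome
        rw [sub_node_up]
        exact hsome
    · intro c hc
      obtain ⟨i, q, rfl⟩ := colS_node_elim hc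
      cases i with
      | zero =>
        -- colored vertex below child 0 : only A matters
        have hnotB : ∀ d ∈ B.image up, ¬ d <+: (0 : ℕ) :: q := by
          intro d hd hdp
          obtain ⟨e, he, rfl⟩ := Finset.mem_image.mp hd
          obtain ⟨j, r, rfl, _⟩ := hBelt e he
          rw [show up (j :: r) = (j + 1) :: r from rfl, List.cons_prefix_cons] at hdp
          exact Nat.succ_ne_zero j hdp.1
        rcases hAcase with rfl | ⟨Z, hZmc, rfl⟩
        · refine ⟨[0], ⟨Finset.mem_union_left _ (Finset.mem_singleton_self _),
            List.cons_prefix_cons.mpr ⟨rfl, List.nil_prefix⟩⟩, ?_⟩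
          rintro d ⟨hdY, hdp⟩
          rcases Finset.mem_union.mp hdY with hd | hd
          · exact Finset.mem_singleton.mp hd
          · exact absurd hdp (hnotB d hd)
        · -- A = Z.image (0 :: ·) with Z minimally complete for t0
          have hq : q ∈ colS t0 := by
            rw [mem_colS]
            rw [mem_colS] at hc
            obtain ⟨a, ha⟩ := hc
            rw [sub_node_cons_zero] at ha
            exact ⟨a, ha⟩
          obtain ⟨e, ⟨heZ, hep⟩, huniq⟩ := hZmc.2 q hq
          refine ⟨0 :: e, ⟨Finset.mem_union_left _
            (Finset.mem_image.mpr ⟨e, heZ, rfl⟩),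
            List.cons_prefix_cons.mpr ⟨rfl, hep⟩⟩, ?_⟩
          rintro d ⟨hdY, hdp⟩
          rcases Finset.mem_union.mp hdY with hd | hd
          · obtain ⟨e', he'Z, rfl⟩ := Finset.mem_image.mp hd
            rw [List.cons_prefix_cons] at hdp
            rw [huniq e' ⟨he'Z, hdp.2⟩]
          · exact absurd hdp (hnotB d hd)
      | succ j =>
        -- colored vertex below child j+1 : only B matters
        have hnotA : ∀ d ∈ A, ¬ d <+: (j + 1) :: q := by
          intro d hd hdp
          obtain ⟨r, rfl, _⟩ := hAelt d hd
          rw [List.cons_prefix_cons] at hdp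
          exact Nat.succ_ne_zero j hdp.1.symm
        have hcol : (j :: q) ∈ colS (node ts') := by
          rw [mem_colS]
          rw [mem_colS] at hc
          obtain ⟨a, ha⟩ := hc
          rw [sub_node_up] at ha
          exact ⟨a, ha⟩
        obtain ⟨e, ⟨heB, hep⟩, huniq⟩ := hBcomp (j :: q) hcol
        obtain ⟨k, r, rfl, _⟩ := hBelt e heB
        rw [List.cons_prefix_cons] at hep
        obtain ⟨rfl, hrq⟩ := hep
        refine ⟨(k + 1) :: r, ⟨Finset.mem_union_right _
          (Finset.mem_image.mpr ⟨k :: r, heB, rfl⟩),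
          List.cons_prefix_cons.mpr ⟨rfl, hrq⟩⟩, ?_⟩
        rintro d ⟨hdY, hdp⟩
        rcases Finset.mem_union.mp hdY with hd | hd
        · exact absurd hdp (hnotA d hd)
        · obtain ⟨e', he'B, rfl⟩ := Finset.mem_image.mp hd
          obtain ⟨k', r', rfl, _⟩ := hBelt e' he'B
          rw [show up (k' :: r') = (k' + 1) :: r' from rfl, List.cons_prefix_cons] at hdp
          obtain ⟨hk, hr⟩ := hdp
          have hk' : k' = k := Nat.succ_injective hk
          subst hk'
          have : k' :: r' = k' :: r := huniq (k' :: r')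
            ⟨he'B, List.cons_prefix_cons.mpr ⟨rfl, hr⟩⟩
          rw [show up (k' :: r') = (k' + 1) :: r' from rfl, (List.cons.inj this).2]

theorem card_MCfin_node_cons (t0 : CTree α) (ts' : List (CTree α))
    (h0 : ∀ q, t0.sub q ≠ some (node ([] : List (CTree α)))) :
    (MCfin (node (t0 :: ts'))).card =
      (D0 t0).card * (MCfin (node ts')).card := by
  rw [MCfin_node_cons t0 ts' h0, Finset.card_image_of_injOn, Finset.card_product]
  rintro ⟨A, B⟩ hAB ⟨A', B'⟩ hAB' heq
  simp only [Finset.mem_coe, Finset.mem_product] at hAB hAB'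
  -- elements of A, A' have head 0; elements of the up-images have nonzero head
  have keyA : ∀ (A₀ : Finset (List ℕ)), A₀ ∈ D0 t0 → ∀ p ∈ A₀, p.head? = some 0 := by
    intro A₀ hA₀ p hp
    cases t0 with
    | leaf a =>
      simp only [D0, Finset.mem_singleton] at hA₀
      subst hA₀
      simp only [Finset.mem_singleton] at hp
      subst hp; rfl
    | node cs =>
      simp only [D0, Finset.mem_insert] at hA₀
      rcases hA₀ with rfl | hA₀
      · simp only [Finset.mem_singleton] at hp; subst hp; rfl
      · obtain ⟨Z, _, rfl⟩ := Finset.mem_image.mp hA₀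
        obtain ⟨q, _, rfl⟩ := Finset.mem_image.mp hp
        rfl
  have keyB : ∀ (B₀ : Finset (List ℕ)), B₀ ∈ MCfin (node ts') →
      ∀ p ∈ B₀.image up, p.head? ≠ some 0 := by
    intro B₀ hB₀ p hp
    obtain ⟨q, hq, rfl⟩ := Finset.mem_image.mp hp
    have hne : q ≠ [] := (mem_edgeS.mp ((mem_MCfin.mp hB₀).1 hq)).1
    cases q with
    | nil => exact absurd rfl hne
    | cons j r => simp [up]
  have hsplit : ∀ (A₀ B₀ : Finset (List ℕ)), A₀ ∈ D0 t0 → B₀ ∈ MCfin (node ts') →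
      (A₀ ∪ B₀.image up).filter (fun p => p.head? = some 0) = A₀ := by
    intro A₀ B₀ hA₀ hB₀
    ext p
    simp only [Finset.mem_filter, Finset.mem_union]
    constructor
    · rintro ⟨hp | hp, hhead⟩
      · exact hp
      · exact absurd hhead (keyB B₀ hB₀ p hp)
    · intro hp
      exact ⟨Or.inl hp, keyA A₀ hA₀ p hp⟩
  have hsplit2 : ∀ (A₀ B₀ : Finset (List ℕ)), A₀ ∈ D0 t0 → B₀ ∈ MCfin (node ts') →
      (A₀ ∪ B₀.image up).filter (fun p => p.head? ≠ some 0) = B₀.image up := by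
    intro A₀ B₀ hA₀ hB₀
    ext p
    simp only [Finset.mem_filter, Finset.mem_union]
    constructor
    · rintro ⟨hp | hp, hhead⟩
      · exact absurd (keyA A₀ hA₀ p hp) hhead
      · exact hp
    · intro hp
      exact ⟨Or.inr hp, keyB B₀ hB₀ p hp⟩
  have hA : A = A' := by
    rw [← hsplit A B hAB.1 hAB.2, ← hsplit A' B' hAB'.1 hAB'.2]
    simp only at heq
    rw [heq]
  have hB : B = B' := by
    have : B.image up = B'.image up := by
      rw [← hsplit2 A B hAB.1 hAB.2, ← hsplit2 A' B' hAB'.1 hAB'.2]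
      simp only at heq
      rw [heq]
    exact Finset.image_injective up_injective this
  simp [hA, hB]

theorem setMC_ncard (t : CTree α) :
    Set.ncard {Y : Finset (List ℕ) | MinComplete t Y} = (MCfin t).card := by
  have : {Y : Finset (List ℕ) | MinComplete t Y} = ↑(MCfin t) := by
    ext Y
    simp [mem_MCfin]
  rw [this, Set.ncard_coe_finset]

theorem card_MCfin_node (ts : List (CTree α))
    (h : ∀ i (hi : i < ts.length) q,
      (ts.get ⟨i, hi⟩).sub q ≠ some (node ([] : List (CTree α)))) :
    (MCfin (node ts)).card =
      (ts.map (fun c => (match c with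
        | leaf _ => 0
        | node cs => (MCfin (node cs)).card) + 1)).prod := by
  induction ts with
  | nil => simp [MCfin_node_nil]
  | cons t0 ts' ih =>
    have h0 : ∀ q, t0.sub q ≠ some (node ([] : List (CTree α))) :=
      h 0 (Nat.succ_pos _)
    rw [card_MCfin_node_cons t0 ts' h0, List.map_cons, List.prod_cons, card_D0,
      ih (fun i hi q => h (i + 1) (Nat.succ_lt_succ hi) q)]

end CTree

/-- If `Γ` has principal subtrees `Γ₁, …, Γ_m` and `r_i` denotes the
number of minimally complete subsets of `E(Γ_i)` (with `r_i = 0` when `Γ_i` is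
trivial), then the number of minimally complete subsets of `E(Γ)` is
`(r₁ + 1) ⋯ (r_m + 1)`. -/
theorem ncard_minComplete_eq_prod {α : Type} (ts : List (CTree α))
    (h : (CTree.node ts).IsColoredTree) :
    Set.ncard {Y : Finset (List ℕ) | (CTree.node ts).MinComplete Y} =
      (ts.map (fun c =>
        (match c with
          | CTree.leaf _ => 0
          | CTree.node cs =>
              Set.ncard {Y : Finset (List ℕ) | (CTree.node cs).MinComplete Y})
        + 1)).prod := by
  rw [CTree.setMC_ncard]
  rw [CTree.card_MCfin_node ts (fun i hi q hq => h.1 (i :: q)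
    (by rw [CTree.sub_cons_of_getElem ts i hi]; exact hq))]
  congr 1
  apply List.map_congr_left
  intro c _
  cases c with
  | leaf a => rfl
  | node cs => simp only [CTree.setMC_ncard]
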